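/- Let d ≥ 1 and m ≥ 1, and let C ⊆ (Fin (2*m) → ZMod d) be a code with exactly d^m codewords such that any two distinct codewords have Hamming distance at least m+1. Let Φ ∈ EuclideanSpace ℂ (Fin (2*m) → ZMod d) be the unit vector with Φ(x) = (Real.sqrt (d^m))⁻¹ if x ∈ C and Φ(x) = 0 otherwise (the state (1/√(d^m)) ∑_{c∈C} |c⟩). Then for every subset B ⊆ Fin (2*m) with |B| = m, with A = Bᶜ its complement, the family of vectors (φ_k) indexed by k : B → ZMod d, where φ_k ∈ EuclideanSpace ℂ (A → ZMod d) is defined by φ_k(y) = Real.sqrt (d^m) · Φ(x_{k,y}) with x_{k,y} the word of length 2m agreeing with k on the coordinates in B and with y on the coordinates in A, is an orthonormal family. (Hence Φ has the Schmidt form (1/√(d^m)) ∑_k |k⟩_B |φ_k⟩_A with orthonormal φ_k for every bipartition into two sets of m parties; that is, Φ is an AME(2m,d) state constructed from the MDS code C.) -/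

import Mathlib

/-- **MDS codes give AME(2m,d) states.**
Let `Φ` be the unit vector `(1/√(d^m)) ∑_{c ∈ C} |c⟩` built from an MDS code `C`
of length `2m` and minimum distance `m+1` with `d^m` codewords.  Then for every
bipartition of the `2m` parties into `B` (with `|B| = m`) and `A = Bᶜ`, the family
of vectors `φ_k (y) = √(d^m) · Φ (x_{k,y})`, indexed by `k : B → ZMod d`, where
`x_{k,y}` agrees with `k` on `B` and with `y` on `A`, is orthonormal.  Hence `Φ`
has the Schmidt form `(1/√(d^m)) ∑_k |k⟩_B |φ_k⟩_A` for every such bipartition,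
i.e. `Φ` is absolutely maximally entangled. -/
theorem mds_state_is_AME (d m : ℕ) [NeZero d] (hm : 1 ≤ m)
    (C : Finset (Fin (2 * m) → ZMod d))
    (hcard : C.card = d ^ m)
    (hdist : ∀ c ∈ C, ∀ c' ∈ C, c ≠ c' → m + 1 ≤ hammingDist c c')
    (Φ : EuclideanSpace ℂ (Fin (2 * m) → ZMod d))
    (hΦ : ∀ x : Fin (2 * m) → ZMod d,
      Φ x = if x ∈ C then (((Real.sqrt ((d : ℝ) ^ m))⁻¹ : ℝ) : ℂ) else 0)
    (B : Finset (Fin (2 * m))) (hB : B.card = m) :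
    Orthonormal ℂ (fun k : {i // i ∈ B} → ZMod d =>
      (WithLp.equiv 2 (({i // i ∈ Bᶜ} → ZMod d) → ℂ)).symm
        (fun y : {i // i ∈ Bᶜ} → ZMod d =>
          ((Real.sqrt ((d : ℝ) ^ m) : ℝ) : ℂ) *
            Φ (fun i : Fin (2 * m) =>
              if h : i ∈ B then k ⟨i, h⟩ else y ⟨i, Finset.mem_compl.mpr h⟩))) := by
  classical
  have hd : 0 < d := Nat.pos_of_ne_zero (NeZero.ne d)
  have hdm : (0:ℝ) < (d:ℝ) ^ m := by positivity
  have hsqrt : ((Real.sqrt ((d:ℝ)^m) : ℝ) : ℂ) * (((Real.sqrt ((d:ℝ)^m))⁻¹ : ℝ) : ℂ) = 1 := by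
    rw [← Complex.ofReal_mul, mul_inv_cancel₀ (by positivity)]
    simp
  set rB : (Fin (2*m) → ZMod d) → ({i // i ∈ B} → ZMod d) := fun c i => c i with hrBdef
  set rA : (Fin (2*m) → ZMod d) → ({i // i ∈ Bᶜ} → ZMod d) := fun c i => c i with hrAdef
  have hcardA : Bᶜ.card = m := by
    rw [Finset.card_compl, hB, Fintype.card_fin]; omega
  have hdist_eq : ∀ c c' : Fin (2*m) → ZMod d,
      hammingDist c c' = (Finset.univ.filter fun i => c i ≠ c' i).card := fun _ _ => rfl
  have hinj : Set.InjOn rB C := by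
    intro c hc c' hc' h
    by_contra hne
    have h1 := hdist c hc c' hc' hne
    have h2 : hammingDist c c' ≤ m := by
      have hsub : (Finset.univ.filter fun i => c i ≠ c' i) ⊆ Bᶜ := by
        intro i hi
        simp only [Finset.mem_filter] at hi
        rw [Finset.mem_compl]
        intro hiB
        exact hi.2 (congrFun h ⟨i, hiB⟩)
      calc hammingDist c c' ≤ Bᶜ.card := by
            rw [hdist_eq]; exact Finset.card_le_card hsub
        _ = m := hcardA
    omega
  have hcardfun : Fintype.card ({i // i ∈ B} → ZMod d) = d ^ m := by
    rw [Fintype.card_fun, ZMod.card, Fintype.card_coe, hB]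
  have hsurj : ∀ k, ∃ x, x ∈ C ∧ rB x = k := by
    have himg : C.image rB = Finset.univ := by
      apply Finset.eq_univ_of_card
      rw [Finset.card_image_of_injOn hinj, hcard, hcardfun]
    intro k
    have : k ∈ C.image rB := himg ▸ Finset.mem_univ k
    simpa using Finset.mem_image.mp this
  choose c hcC hcB using hsurj
  have huniq : ∀ k x, x ∈ C → rB x = k → x = c k :=
    fun k x hx hxk => hinj hx (hcC k) (by rw [hxk, hcB])
  have hg : Function.Injective (fun k => rA (c k)) := by
    intro k k' h
    have hcc : c k = c k' := by
      by_contra hne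
      have h1 := hdist _ (hcC k) _ (hcC k') hne
      have h2 : hammingDist (c k) (c k') ≤ m := by
        have hsub : (Finset.univ.filter fun i => c k i ≠ c k' i) ⊆ B := by
          intro i hi
          simp only [Finset.mem_filter] at hi
          by_contra hiB
          exact hi.2 (congrFun h ⟨i, Finset.mem_compl.mpr hiB⟩)
        calc hammingDist (c k) (c k') ≤ B.card := by
              rw [hdist_eq]; exact Finset.card_le_card hsub
          _ = m := hB
      omega
    rw [← hcB k, ← hcB k', hcc]
  have key : ∀ k : {i // i ∈ B} → ZMod d,
      (WithLp.equiv 2 (({i // i ∈ Bᶜ} → ZMod d) → ℂ)).symm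
        (fun y : {i // i ∈ Bᶜ} → ZMod d =>
          ((Real.sqrt ((d : ℝ) ^ m) : ℝ) : ℂ) *
            Φ (fun i : Fin (2 * m) =>
              if h : i ∈ B then k ⟨i, h⟩ else y ⟨i, Finset.mem_compl.mpr h⟩))
      = EuclideanSpace.single (rA (c k)) (1:ℂ) := by
    intro k
    ext y
    rw [WithLp.equiv_symm_apply, PiLp.toLp_apply, EuclideanSpace.single_apply]
    set x : Fin (2*m) → ZMod d := fun i =>
      if h : i ∈ B then k ⟨i, h⟩ else y ⟨i, Finset.mem_compl.mpr h⟩ with hxdef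
    by_cases hy : y = rA (c k)
    · have hx : x = c k := by
        funext i
        by_cases hi : i ∈ B
        · simp only [hxdef, dif_pos hi]
          exact (congrFun (hcB k) ⟨i, hi⟩).symm
        · simp only [hxdef, dif_neg hi]
          rw [hy]
      rw [if_pos hy, hΦ, hx, if_pos (hcC k), hsqrt]
    · have hx : x ∉ C := by
        intro hxC
        have hrBx : rB x = k := by
          funext i
          simp only [hrBdef, hxdef, dif_pos i.2]
        have := huniq k x hxC hrBx
        apply hy
        funext i
        have hi := Finset.mem_compl.mp i.2
        calc y i = x i := by simp only [hxdef, dif_neg hi]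
          _ = c k i := congrFun this i
      rw [if_neg hy, hΦ, if_neg hx, mul_zero]
  have hon : Orthonormal ℂ
      (fun j : {i // i ∈ Bᶜ} → ZMod d => EuclideanSpace.single j (1:ℂ)) := by
    rw [orthonormal_iff_ite]
    intro i j
    rw [EuclideanSpace.inner_single_left]
    simp [EuclideanSpace.single_apply, eq_comm]
  have heq : (fun k : {i // i ∈ B} → ZMod d =>
      (WithLp.equiv 2 (({i // i ∈ Bᶜ} → ZMod d) → ℂ)).symm
        (fun y : {i // i ∈ Bᶜ} → ZMod d =>
          ((Real.sqrt ((d : ℝ) ^ m) : ℝ) : ℂ) *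
            Φ (fun i : Fin (2 * m) =>
              if h : i ∈ B then k ⟨i, h⟩ else y ⟨i, Finset.mem_compl.mpr h⟩)))
      = (fun j => EuclideanSpace.single j (1:ℂ)) ∘ (fun k => rA (c k)) := funext key
  rw [heq]
  exact hon.comp _ hg
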